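/- Let S = ⟨n₁, …, n_k⟩ with n₁ < ⋯ < n_k. For all n ∈ S with n > n_{k−1}n_k (and n + n_k, n + n₁ ∈ S respectively), one has ℓ(n + n_k) = ℓ(n) + 1 and L(n + n₁) = L(n) + 1. -/

import Mathlib

/-- The set of factorization lengths of `n` over the generators `gens`. -/
def lenSet (k : ℕ) (gens : Fin k → ℕ) (n : ℕ) : Set ℕ :=
  {l | ∃ x : Fin k → ℕ, n = ∑ i, x i * gens i ∧ l = ∑ i, x i}

lemma count_sum_eq {k : ℕ} (gens : Fin k → ℕ) (L : List (Fin k)) :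
    (L.map gens).sum = ∑ i, (L.count i) * gens i ∧ L.length = ∑ i, L.count i := by
  induction L with
  | nil => simp
  | cons a L ih =>
    simp only [List.map_cons, List.sum_cons, List.count_cons, List.length_cons,
      beq_iff_eq]
    constructor
    · rw [ih.1]
      have h : ∀ i : Fin k, (L.count i + if a = i then 1 else 0) * gens i
          = L.count i * gens i + (if a = i then gens i else 0) := by
        intro i; split <;> ring
      simp only [h, Finset.sum_add_distrib, Finset.sum_ite_eq, Finset.mem_univ, if_true]
      ring
    · rw [ih.2]
      simp [Finset.sum_add_distrib]

lemma mem_lenSet_iff {k : ℕ} (gens : Fin k → ℕ) (n l : ℕ) :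
    l ∈ lenSet k gens n ↔ ∃ L : List (Fin k), n = (L.map gens).sum ∧ l = L.length := by
  constructor
  · rintro ⟨x, rfl, rfl⟩
    refine ⟨(List.finRange k).flatMap fun i => List.replicate (x i) i, ?_, ?_⟩
    · have h : ∀ I : List (Fin k),
          ((I.flatMap fun i => List.replicate (x i) i).map gens).sum
            = (I.map fun i => x i * gens i).sum := by
        intro I; induction I with
        | nil => simp
        | cons a I ih =>
          simp [List.flatMap_cons, ih, List.sum_replicate, smul_eq_mul]
      rw [h, Fin.sum_univ_def]
    · have h : ∀ I : List (Fin k),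
          (I.flatMap fun i => List.replicate (x i) i).length = (I.map x).sum := by
        intro I; induction I with
        | nil => simp
        | cons a I ih => simp [List.flatMap_cons, ih]
      rw [h, Fin.sum_univ_def]
  · rintro ⟨L, rfl, rfl⟩
    exact ⟨fun i => L.count i, (count_sum_eq gens L).1, (count_sum_eq gens L).2⟩

lemma closure_exists_list {k : ℕ} (gens : Fin k → ℕ) {n : ℕ}
    (hn : n ∈ AddSubmonoid.closure (Set.range gens)) :
    ∃ L : List (Fin k), n = (L.map gens).sum := by
  induction hn using AddSubmonoid.closure_induction with
  | mem a ha => obtain ⟨i, rfl⟩ := ha; exact ⟨[i], by simp⟩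
  | zero => exact ⟨[], rfl⟩
  | add a b _ _ iha ihb =>
    obtain ⟨La, rfl⟩ := iha; obtain ⟨Lb, rfl⟩ := ihb
    exact ⟨La ++ Lb, by simp⟩

lemma exists_shorter {k : ℕ} (hk : 1 < k) (gens : Fin k → ℕ)
    (hmono : StrictMono gens) (hpos : 0 < gens ⟨0, by omega⟩)
    (L : List (Fin k)) (hlast : (⟨k - 1, by omega⟩ : Fin k) ∉ L)
    (hlen : gens ⟨k - 1, by omega⟩ < L.length) :
    ∃ L' : List (Fin k), (L'.map gens).sum = (L.map gens).sum ∧ L'.length < L.length := by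
  set last : Fin k := ⟨k - 1, by omega⟩ with hlastdef
  set B := gens last with hBdef
  have hBpos : 0 < B := lt_of_lt_of_le hpos (hmono.monotone (by simp [Fin.le_def]))
  set s : ℕ → ℕ := fun t => ((L.take t).map gens).sum with hsdef
  have key : ∀ u t : ℕ, u < t → t ≤ B → s u % B = s t % B →
      ∃ L' : List (Fin k), (L'.map gens).sum = (L.map gens).sum ∧ L'.length < L.length := by
    intro u t hut htB heq
    set c := t - u with hcdef
    have htuc : t = u + c := by omega
    have hc1 : 1 ≤ c := by omega
    have htL : t ≤ L.length := by omega
    set C := (L.drop u).take c with hCdef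
    have htake : L.take t = L.take u ++ C := by rw [htuc]; exact List.take_add
    set V := (C.map gens).sum with hVdef
    have hst : s t = s u + V := by
      simp only [hsdef, htake, List.map_append, List.sum_append]
      rfl
    have hClen : C.length = c := by
      simp only [hCdef, List.length_take, List.length_drop]; omega
    have hCmem : ∀ j ∈ C, j ≠ last := by
      intro j hj hj'
      exact hlast (hj' ▸ List.mem_of_mem_drop (List.mem_of_mem_take hj))
    have hCub : ∀ j ∈ C, gens j ≤ gens ⟨k - 2, by omega⟩ := by
      intro j hj
      have h1 := hCmem j hj
      have h2 : j.val ≠ k - 1 := fun h => h1 (Fin.ext h)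
      have := j.isLt
      exact hmono.monotone (by simp [Fin.le_def]; omega)
    have hVub : V ≤ c * gens ⟨k - 2, by omega⟩ := by
      have := List.sum_le_card_nsmul (C.map gens) (gens ⟨k - 2, by omega⟩)
        (by simpa using fun j hj => hCub j hj)
      simpa [hClen, smul_eq_mul] using this
    have hVpos : 0 < V := by
      have := List.card_nsmul_le_sum (C.map gens) 1
        (by
          simp only [List.mem_map, forall_exists_index, and_imp]
          rintro y j hj rfl
          exact le_trans hpos (hmono.monotone (show (⟨0, by omega⟩ : Fin k) ≤ j by
            simp [Fin.le_def])))
      simp only [List.length_map, hClen, smul_eq_mul, mul_one] at this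
      omega
    have hdvd : B ∣ V := by
      have h1 : (s u + V) % B = s u % B := by rw [← hst, heq]
      have h2 : V ≡ 0 [MOD B] := Nat.ModEq.add_left_cancel' (s u)
        (show (s u + V) % B = (s u + 0) % B by rw [add_zero]; exact h1)
      exact (Nat.modEq_zero_iff_dvd).mp h2
    obtain ⟨q, hq⟩ := hdvd
    have hq1 : 1 ≤ q := by
      rcases Nat.eq_zero_or_pos q with h | h
      · simp [h] at hq; omega
      · exact h
    have hAB : gens ⟨k - 2, by omega⟩ < B := hmono (by rw [Fin.lt_def]; show k - 2 < k - 1; omega)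
    have hqc : q < c := by
      rw [hq] at hVub
      have h2 : c * gens ⟨k - 2, by omega⟩ < c * B :=
        Nat.mul_lt_mul_of_le_of_lt (le_refl c) hAB (by omega)
      have h3 : B * q < B * c := by
        calc B * q ≤ c * gens ⟨k - 2, by omega⟩ := hVub
        _ < c * B := h2
        _ = B * c := mul_comm c B
      exact Nat.lt_of_mul_lt_mul_left h3
    refine ⟨L.take u ++ L.drop t ++ List.replicate q last, ?_, ?_⟩
    · have hsplit : (L.map gens).sum = s t + ((L.drop t).map gens).sum := by
        conv_rhs => rw [hsdef]
        rw [← List.sum_append, ← List.map_append, List.take_append_drop]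
      simp only [List.map_append, List.sum_append, List.map_replicate,
        List.sum_replicate, smul_eq_mul, hsplit, hst]
      have h5 : s u = ((L.take u).map gens).sum := rfl
      have h6 : q * gens last = V := by rw [hq]; ring
      have h7 : q * B = V := h6
      omega
    · simp only [List.length_append, List.length_take, List.length_drop,
        List.length_replicate]
      omega
  have hmaps : ∀ a ∈ Finset.range (B + 1), s a % B ∈ Finset.range B := by
    intro a _; exact Finset.mem_range.mpr (Nat.mod_lt _ hBpos)
  obtain ⟨u, hu, t, ht, hne, heq⟩ :=
    Finset.exists_ne_map_eq_of_card_lt_of_maps_to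
      (by simp : (Finset.range B).card < (Finset.range (B + 1)).card) hmaps
  simp only [Finset.mem_range] at hu ht
  rcases lt_or_gt_of_ne hne with h | h
  · exact key u t h (by omega) heq
  · exact key t u h (by omega) heq.symm

lemma exists_longer {k : ℕ} (hk : 1 < k) (gens : Fin k → ℕ)
    (hmono : StrictMono gens) (hpos : 0 < gens ⟨0, by omega⟩)
    (L : List (Fin k)) (hfirst : (⟨0, by omega⟩ : Fin k) ∉ L)
    (hlen : gens ⟨0, by omega⟩ ≤ L.length) :
    ∃ L' : List (Fin k), (L'.map gens).sum = (L.map gens).sum ∧ L.length < L'.length := by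
  set first : Fin k := ⟨0, by omega⟩ with hfirstdef
  set b := gens first with hbdef
  have hbpos : 0 < b := hpos
  set s : ℕ → ℕ := fun t => ((L.take t).map gens).sum with hsdef
  have key : ∀ u t : ℕ, u < t → t ≤ b → s u % b = s t % b →
      ∃ L' : List (Fin k), (L'.map gens).sum = (L.map gens).sum ∧ L.length < L'.length := by
    intro u t hut htb heq
    set c := t - u with hcdef
    have htuc : t = u + c := by omega
    have hc1 : 1 ≤ c := by omega
    have htL : t ≤ L.length := by omega
    set C := (L.drop u).take c with hCdef
    have htake : L.take t = L.take u ++ C := by rw [htuc]; exact List.take_add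
    set V := (C.map gens).sum with hVdef
    have hst : s t = s u + V := by
      simp only [hsdef, htake, List.map_append, List.sum_append]
      rfl
    have hClen : C.length = c := by
      simp only [hCdef, List.length_take, List.length_drop]; omega
    have hCmem : ∀ j ∈ C, j ≠ first := by
      intro j hj hj'
      exact hfirst (hj' ▸ List.mem_of_mem_drop (List.mem_of_mem_take hj))
    have hClb : ∀ j ∈ C, b + 1 ≤ gens j := by
      intro j hj
      have h1 := hCmem j hj
      have h2 : j.val ≠ 0 := fun h => h1 (Fin.ext h)
      have h3 : gens ⟨1, by omega⟩ ≤ gens j :=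
        hmono.monotone (by simp [Fin.le_def]; omega)
      have h4 : b < gens ⟨1, by omega⟩ := hmono (by rw [Fin.lt_def]; show 0 < 1; omega)
      omega
    have hVlb : c * (b + 1) ≤ V := by
      have := List.card_nsmul_le_sum (C.map gens) (b + 1)
        (by
          simp only [List.mem_map, forall_exists_index, and_imp]
          rintro y j hj rfl
          exact hClb j hj)
      simpa [hClen, smul_eq_mul] using this
    have hdvd : b ∣ V := by
      have h1 : (s u + V) % b = s u % b := by rw [← hst, heq]
      have h2 : V ≡ 0 [MOD b] := Nat.ModEq.add_left_cancel' (s u)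
        (show (s u + V) % b = (s u + 0) % b by rw [add_zero]; exact h1)
      exact (Nat.modEq_zero_iff_dvd).mp h2
    obtain ⟨q, hq⟩ := hdvd
    have hqc : c < q := by
      rw [hq] at hVlb
      have h3 : b * c < b * q := by
        calc b * c < c * (b + 1) := by nlinarith
        _ ≤ b * q := hVlb
      exact Nat.lt_of_mul_lt_mul_left h3
    refine ⟨L.take u ++ L.drop t ++ List.replicate q first, ?_, ?_⟩
    · have hsplit : (L.map gens).sum = s t + ((L.drop t).map gens).sum := by
        conv_rhs => rw [hsdef]
        rw [← List.sum_append, ← List.map_append, List.take_append_drop]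
      simp only [List.map_append, List.sum_append, List.map_replicate,
        List.sum_replicate, smul_eq_mul, hsplit, hst]
      have h5 : s u = ((L.take u).map gens).sum := rfl
      have h6 : q * gens first = V := by rw [hq]; ring
      have h7 : q * b = V := h6
      omega
    · simp only [List.length_append, List.length_take, List.length_drop,
        List.length_replicate]
      omega
  have hmaps : ∀ a ∈ Finset.range (b + 1), s a % b ∈ Finset.range b := by
    intro a _; exact Finset.mem_range.mpr (Nat.mod_lt _ hbpos)
  obtain ⟨u, hu, t, ht, hne, heq⟩ :=
    Finset.exists_ne_map_eq_of_card_lt_of_maps_to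
      (by simp : (Finset.range b).card < (Finset.range (b + 1)).card) hmaps
  simp only [Finset.mem_range] at hu ht
  rcases lt_or_gt_of_ne hne with h | h
  · exact key u t h (by omega) heq
  · exact key t u h (by omega) heq.symm

/-- For S = ⟨n₁ < ⋯ < n_k⟩ and n ∈ S with n > n_{k−1}n_k, we have
ℓ(n + n_k) = ℓ(n) + 1 and L(n + n₁) = L(n) + 1. -/
theorem stmt_14 (k : ℕ) (hk : 2 ≤ k) (gens : Fin k → ℕ)
    (hmono : StrictMono gens) (hpos : 0 < gens ⟨0, by omega⟩) :
    ∀ n : ℕ, n ∈ AddSubmonoid.closure (Set.range gens) →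
      gens ⟨k - 2, by omega⟩ * gens ⟨k - 1, by omega⟩ < n →
      sInf (lenSet k gens (n + gens ⟨k - 1, by omega⟩)) = sInf (lenSet k gens n) + 1 ∧
      sSup (lenSet k gens (n + gens ⟨0, by omega⟩)) = sSup (lenSet k gens n) + 1 := by
  intro n hn hbig
  have hk0 : 0 < k := by omega
  have hk1 : k - 1 < k := by omega
  have hk2 : k - 2 < k := by omega
  replace hpos : 0 < gens ⟨0, hk0⟩ := hpos
  replace hbig : gens ⟨k - 2, hk2⟩ * gens ⟨k - 1, hk1⟩ < n := hbig
  show sInf (lenSet k gens (n + gens ⟨k - 1, hk1⟩)) = sInf (lenSet k gens n) + 1 ∧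
       sSup (lenSet k gens (n + gens ⟨0, hk0⟩)) = sSup (lenSet k gens n) + 1
  have hpenpos : 0 < gens ⟨k - 2, hk2⟩ :=
    lt_of_lt_of_le hpos (hmono.monotone (by simp [Fin.le_def]))
  have hpenlast : gens ⟨k - 2, hk2⟩ ≤ gens ⟨k - 1, hk1⟩ :=
    hmono.monotone (by simp [Fin.le_def]; omega)
  have hub : ∀ j : Fin k, gens j ≤ gens ⟨k - 1, hk1⟩ :=
    fun j => hmono.monotone (by simp [Fin.le_def]; omega)
  have hlb : ∀ j : Fin k, 1 ≤ gens j :=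
    fun j => le_trans hpos (hmono.monotone (by simp [Fin.le_def]))
  obtain ⟨L₀, hL₀⟩ := closure_exists_list gens hn
  have hne : ∀ m : ℕ, (∃ L : List (Fin k), m = (L.map gens).sum) →
      (lenSet k gens m).Nonempty := by
    rintro m ⟨L, hL⟩
    exact ⟨L.length, (mem_lenSet_iff gens m L.length).mpr ⟨L, hL, rfl⟩⟩
  have hbdd : ∀ m : ℕ, BddAbove (lenSet k gens m) := by
    intro m
    refine ⟨m, fun l hl => ?_⟩
    obtain ⟨L, hsum, hlen⟩ := (mem_lenSet_iff gens m l).mp hl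
    have := List.card_nsmul_le_sum (L.map gens) 1
      (by
        simp only [List.mem_map, forall_exists_index, and_imp]
        rintro y j hj rfl
        exact hlb j)
    simp only [List.length_map, smul_eq_mul, mul_one] at this
    omega
  have hnne : (lenSet k gens n).Nonempty := hne n ⟨L₀, hL₀⟩
  constructor
  · -- sInf part
    have hNne : (lenSet k gens (n + gens ⟨k - 1, hk1⟩)).Nonempty :=
      hne _ ⟨L₀ ++ [⟨k - 1, hk1⟩], by simp [hL₀]⟩
    obtain ⟨La, hLasum, hLalen⟩ :=
      (mem_lenSet_iff gens n (sInf (lenSet k gens n))).mp (Nat.sInf_mem hnne)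
    obtain ⟨L, hLsum, hLlen⟩ :=
      (mem_lenSet_iff gens _ (sInf (lenSet k gens (n + gens ⟨k - 1, hk1⟩)))).mp
        (Nat.sInf_mem hNne)
    have hup : sInf (lenSet k gens (n + gens ⟨k - 1, hk1⟩))
        ≤ sInf (lenSet k gens n) + 1 := by
      apply Nat.sInf_le
      exact (mem_lenSet_iff gens _ _).mpr
        ⟨La ++ [⟨k - 1, hk1⟩], by simp [hLasum], by simp [hLalen]⟩
    have hlow : sInf (lenSet k gens n) + 1
        ≤ sInf (lenSet k gens (n + gens ⟨k - 1, hk1⟩)) := by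
      by_cases hmem : (⟨k - 1, hk1⟩ : Fin k) ∈ L
      · have hperm := List.perm_cons_erase hmem
        have hsum2 : (L.map gens).sum
            = gens ⟨k - 1, hk1⟩ + ((L.erase ⟨k - 1, hk1⟩).map gens).sum := by
          rw [(hperm.map gens).sum_eq]; simp
        have hlen2 : L.length = (L.erase (⟨k - 1, hk1⟩ : Fin k)).length + 1 := by
          rw [hperm.length_eq]; simp
        have hn2 : n = ((L.erase (⟨k - 1, hk1⟩ : Fin k)).map gens).sum := by
          have h9 := hLsum
          rw [hsum2] at h9
          omega
        have h3 : sInf (lenSet k gens n) ≤ (L.erase (⟨k - 1, hk1⟩ : Fin k)).length :=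
          Nat.sInf_le ((mem_lenSet_iff gens n _).mpr ⟨L.erase ⟨k - 1, hk1⟩, hn2, rfl⟩)
        omega
      · exfalso
        have hple : ∀ j ∈ L, gens j ≤ gens ⟨k - 2, hk2⟩ := by
          intro j hj
          have h2 : j.val ≠ k - 1 := fun h => hmem (by rwa [show j = ⟨k - 1, hk1⟩ from Fin.ext h] at hj)
          have := j.isLt
          exact hmono.monotone (by simp [Fin.le_def]; omega)
        have hsumle : n + gens ⟨k - 1, hk1⟩ ≤ L.length * gens ⟨k - 2, hk2⟩ := by
          have := List.sum_le_card_nsmul (L.map gens) (gens ⟨k - 2, hk2⟩)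
            (by
              simp only [List.mem_map, forall_exists_index, and_imp]
              rintro y j hj rfl
              exact hple j hj)
          simp only [List.length_map, smul_eq_mul] at this
          omega
        have hlenbig : gens ⟨k - 1, hk1⟩ < L.length := by
          by_contra hcon
          push_neg at hcon
          have h8 : L.length * gens ⟨k - 2, hk2⟩
              ≤ gens ⟨k - 1, hk1⟩ * gens ⟨k - 2, hk2⟩ :=
            Nat.mul_le_mul_right _ hcon
          have h9 : gens ⟨k - 1, hk1⟩ * gens ⟨k - 2, hk2⟩
              = gens ⟨k - 2, hk2⟩ * gens ⟨k - 1, hk1⟩ := mul_comm _ _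
          omega
        obtain ⟨L', hL'sum, hL'len⟩ := exists_shorter hk gens hmono hpos L hmem hlenbig
        have h7 : sInf (lenSet k gens (n + gens ⟨k - 1, hk1⟩)) ≤ L'.length :=
          Nat.sInf_le ((mem_lenSet_iff gens _ _).mpr ⟨L', by rw [hL'sum, hLsum], rfl⟩)
        omega
    omega
  · -- sSup part
    have hNne : (lenSet k gens (n + gens ⟨0, hk0⟩)).Nonempty :=
      hne _ ⟨L₀ ++ [⟨0, hk0⟩], by simp [hL₀]⟩
    obtain ⟨La, hLasum, hLalen⟩ :=
      (mem_lenSet_iff gens n (sSup (lenSet k gens n))).mp (Nat.sSup_mem hnne (hbdd n))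
    obtain ⟨L, hLsum, hLlen⟩ :=
      (mem_lenSet_iff gens _ (sSup (lenSet k gens (n + gens ⟨0, hk0⟩)))).mp
        (Nat.sSup_mem hNne (hbdd _))
    have hup : sSup (lenSet k gens n) + 1
        ≤ sSup (lenSet k gens (n + gens ⟨0, hk0⟩)) := by
      apply le_csSup (hbdd _)
      exact (mem_lenSet_iff gens _ _).mpr
        ⟨La ++ [⟨0, hk0⟩], by simp [hLasum], by simp [hLalen]⟩
    have hlow : sSup (lenSet k gens (n + gens ⟨0, hk0⟩))
        ≤ sSup (lenSet k gens n) + 1 := by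
      by_cases hmem : (⟨0, hk0⟩ : Fin k) ∈ L
      · have hperm := List.perm_cons_erase hmem
        have hsum2 : (L.map gens).sum
            = gens ⟨0, hk0⟩ + ((L.erase ⟨0, hk0⟩).map gens).sum := by
          rw [(hperm.map gens).sum_eq]; simp
        have hlen2 : L.length = (L.erase (⟨0, hk0⟩ : Fin k)).length + 1 := by
          rw [hperm.length_eq]; simp
        have hn2 : n = ((L.erase (⟨0, hk0⟩ : Fin k)).map gens).sum := by
          have h9 := hLsum
          rw [hsum2] at h9
          omega
        have h3 : (L.erase (⟨0, hk0⟩ : Fin k)).length ≤ sSup (lenSet k gens n) :=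
          le_csSup (hbdd n) ((mem_lenSet_iff gens n _).mpr ⟨L.erase ⟨0, hk0⟩, hn2, rfl⟩)
        omega
      · exfalso
        have hsumle : n + gens ⟨0, hk0⟩ ≤ L.length * gens ⟨k - 1, hk1⟩ := by
          have := List.sum_le_card_nsmul (L.map gens) (gens ⟨k - 1, hk1⟩)
            (by
              simp only [List.mem_map, forall_exists_index, and_imp]
              rintro y j hj rfl
              exact hub j)
          simp only [List.length_map, smul_eq_mul] at this
          omega
        have hfirstpen : gens ⟨0, hk0⟩ ≤ gens ⟨k - 2, hk2⟩ :=
          hmono.monotone (by simp [Fin.le_def])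
        have hlenbig : gens ⟨0, hk0⟩ ≤ L.length := by
          by_contra hcon
          push_neg at hcon
          have h8 : L.length * gens ⟨k - 1, hk1⟩
              ≤ gens ⟨k - 2, hk2⟩ * gens ⟨k - 1, hk1⟩ := by
            apply Nat.mul_le_mul_right
            omega
          omega
        obtain ⟨L', hL'sum, hL'len⟩ := exists_longer hk gens hmono hpos L hmem hlenbig
        have h7 : L'.length ≤ sSup (lenSet k gens (n + gens ⟨0, hk0⟩)) :=
          le_csSup (hbdd _) ((mem_lenSet_iff gens _ _).mpr ⟨L', by rw [hL'sum, hLsum], rfl⟩)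
        omega
    omega
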